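/- Let f₀, f₁, ..., f_p : U → ℝ be linearly independent analytic functions on an open interval U, and suppose some f_j has constant sign on U. Then there exist constants C₀, ..., C_p such that the function f = Σ_{i=0}^p C_i f_i has at least p simple zeros in U. -/

import Mathlib

open Set

/-- Auxiliary: linear combinations of analytic functions are analytic. -/
private lemma aux_analytic_comb {n : ℕ} (c : Fin n → ℝ) (f : Fin n → ℝ → ℝ) {s : Set ℝ}
    (hf : ∀ i, AnalyticOnNhd ℝ (f i) s) :
    AnalyticOnNhd ℝ (fun x => ∑ i, c i * f i x) s :=
  Finset.analyticOnNhd_fun_sum _ (fun i _ => analyticOnNhd_const.mul (hf i))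

/-- Auxiliary: existence of points where the evaluation vectors are linearly independent,
sorted increasingly. -/
private lemma aux_exists_points (p : ℕ) (a b : ℝ)
    (f : Fin (p + 1) → ℝ → ℝ)
    (hli : ∀ c : Fin (p + 1) → ℝ,
      (∀ x ∈ Set.Ioo a b, ∑ i, c i * f i x = 0) → c = 0) :
    ∃ x : Fin (p + 1) → ℝ, StrictMono x ∧ (∀ k, x k ∈ Set.Ioo a b) ∧
      LinearIndependent ℝ (fun k => (fun i => f i (x k) : Fin (p + 1) → ℝ)) := by
  classical
  set v : ℝ → (Fin (p + 1) → ℝ) := fun x i => f i x with hv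
  -- The evaluation vectors span everything
  have hspan : Submodule.span ℝ (v '' Set.Ioo a b) = ⊤ := by
    by_contra hne
    obtain ⟨φ, hφ0, hφ⟩ := Submodule.exists_dual_map_eq_bot_of_lt_top
      (lt_top_iff_ne_top.2 hne) inferInstance
    set c : Fin (p + 1) → ℝ := fun i => φ (fun k => if i = k then 1 else 0) with hc
    have hcz : ∀ x ∈ Set.Ioo a b, ∑ i, c i * f i x = 0 := by
      intro x hx
      have hmem : v x ∈ Submodule.span ℝ (v '' Set.Ioo a b) :=
        Submodule.subset_span ⟨x, hx, rfl⟩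
      have h0 : φ (v x) = 0 :=
        (Submodule.eq_bot_iff _).1 hφ _ (Submodule.mem_map_of_mem hmem)
      rw [LinearMap.pi_apply_eq_sum_univ φ (v x)] at h0
      simpa [hv, hc, mul_comm, smul_eq_mul] using h0
    have hc0 : c = 0 := hli c hcz
    apply hφ0
    refine LinearMap.ext fun u => ?_
    rw [LinearMap.pi_apply_eq_sum_univ φ u]
    have : ∀ i, φ (fun k => if i = k then 1 else 0) = 0 := fun i => congrFun hc0 i
    simp [this]
  -- extract a basis of evaluation vectors
  obtain ⟨bs, hbsub, hbspan, hbind⟩ := exists_linearIndependent ℝ (v '' Set.Ioo a b)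
  rw [hspan] at hbspan
  have hbfin : bs.Finite := hbind.setFinite
  haveI := hbfin.fintype
  let B : Module.Basis bs ℝ (Fin (p + 1) → ℝ) :=
    Module.Basis.mk hbind (by rw [Subtype.range_coe, hbspan])
  have hcard : Fintype.card bs = p + 1 := by
    have h1 := Module.finrank_eq_card_basis B
    have h2 : Module.finrank ℝ (Fin (p + 1) → ℝ) = p + 1 := Module.finrank_fin_fun ℝ
    omega
  let e : Fin (p + 1) ≃ bs := (Fintype.equivFinOfCardEq hcard).symm
  choose y hymem hyv using fun u : bs => (hbsub u.2 : (u : Fin (p + 1) → ℝ) ∈ v '' Set.Ioo a b)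
  set y0 : Fin (p + 1) → ℝ := fun k => y (e k) with hy0
  have hvy0 : (fun k => v (y0 k)) = fun k => ((e k : Fin (p + 1) → ℝ)) := by
    funext k; exact hyv (e k)
  have hind0 : LinearIndependent ℝ fun k => v (y0 k) := by
    rw [hvy0]
    exact hbind.comp e e.injective
  have hy0inj : Function.Injective y0 :=
    fun k l hkl => hind0.injective (congrArg v hkl)
  -- sort the points
  let σ := Tuple.sort y0
  refine ⟨y0 ∘ σ, ?_, fun k => hymem (e (σ k)), ?_⟩
  · exact (Tuple.monotone_sort y0).strictMono_of_injective (hy0inj.comp σ.injective)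
  · exact hind0.comp σ σ.injective

theorem exists_combination_with_p_simple_zeros (p : ℕ) (a b : ℝ) (hab : a < b)
    (f : Fin (p + 1) → ℝ → ℝ)
    (han : ∀ i, AnalyticOnNhd ℝ (f i) (Set.Ioo a b))
    (hli : ∀ c : Fin (p + 1) → ℝ,
      (∀ x ∈ Set.Ioo a b, ∑ i, c i * f i x = 0) → c = 0)
    (hsign : ∃ j, (∀ x ∈ Set.Ioo a b, 0 < f j x) ∨ (∀ x ∈ Set.Ioo a b, f j x < 0)) :
    ∃ C : Fin (p + 1) → ℝ, ∃ z : Fin p → ℝ, StrictMono z ∧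
      ∀ i, z i ∈ Set.Ioo a b ∧ (∑ s, C s * f s (z i)) = 0 ∧
        deriv (fun x => ∑ s, C s * f s x) (z i) ≠ 0 := by
  classical
  obtain ⟨j, hj⟩ := hsign
  have hfj : ∀ x ∈ Set.Ioo a b, f j x ≠ 0 := by
    rcases hj with h | h
    · exact fun x hx => (h x hx).ne'
    · exact fun x hx => (h x hx).ne
  rcases Nat.eq_zero_or_pos p with hp0 | hp
  · subst hp0
    exact ⟨0, Fin.elim0, fun i _ _ => i.elim0, fun i => i.elim0⟩
  obtain ⟨x, hxmono, hxmem, hxind⟩ := aux_exists_points p a b f hli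
  -- solve for coefficients with prescribed alternating values
  set M : Matrix (Fin (p + 1)) (Fin (p + 1)) ℝ := Matrix.of (fun k i => f i (x k)) with hM
  have hMunit : IsUnit M := Matrix.linearIndependent_rows_iff_isUnit.1 hxind
  have hMdet : IsUnit M.det := (Matrix.isUnit_iff_isUnit_det M).1 hMunit
  set w : Fin (p + 1) → ℝ := fun k => (-1 : ℝ) ^ (k : ℕ) * f j (x k) with hw
  set c : Fin (p + 1) → ℝ := M⁻¹.mulVec w with hcdef
  have hMc : M.mulVec c = w := by
    rw [hcdef, Matrix.mulVec_mulVec, Matrix.mul_nonsing_inv _ hMdet, Matrix.one_mulVec]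
  set g : ℝ → ℝ := fun u => ∑ s, c s * f s u with hg
  have hgval : ∀ k, g (x k) = (-1 : ℝ) ^ (k : ℕ) * f j (x k) := by
    intro k
    have := congrFun hMc k
    simpa [Matrix.mulVec, dotProduct, hM, hg, hw, mul_comm] using this
  set ψ : ℝ → ℝ := fun u => g u / f j u with hψdef
  have hψval : ∀ k, ψ (x k) = (-1 : ℝ) ^ (k : ℕ) := by
    intro k
    rw [hψdef]
    simp only
    rw [hgval k, mul_div_assoc, div_self (hfj _ (hxmem k)), mul_one]
  have hgan : AnalyticOnNhd ℝ g (Set.Ioo a b) := aux_analytic_comb c f han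
  have hψan : AnalyticOnNhd ℝ ψ (Set.Ioo a b) := hgan.div (han j) hfj
  have hψ'an : AnalyticOnNhd ℝ (deriv ψ) (Set.Ioo a b) := hψan.deriv
  -- the compact interval containing all points
  set K : Set ℝ := Set.Icc (x 0) (x (Fin.last p)) with hK
  have hKsub : K ⊆ Set.Ioo a b := by
    intro u hu
    exact ⟨lt_of_lt_of_le (hxmem 0).1 hu.1, lt_of_le_of_lt hu.2 (hxmem (Fin.last p)).2⟩
  -- critical points in K are finite
  set Z : Set ℝ := {u | u ∈ K ∧ deriv ψ u = 0} with hZ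
  have hZfin : Z.Finite := by
    by_contra hinf
    have hZinf : Z.Infinite := hinf
    obtain ⟨z₀, hz₀K, hacc⟩ := hZinf.exists_accPt_of_subset_isCompact
      isCompact_Icc (fun u hu => hu.1)
    have hfreq : ∃ᶠ u in nhdsWithin z₀ {z₀}ᶜ, deriv ψ u = 0 := by
      rw [accPt_iff_frequently] at hacc
      rw [frequently_nhdsWithin_iff]
      exact hacc.mono fun u hu => ⟨hu.2.2, hu.1⟩
    have heq : Set.EqOn (deriv ψ) 0 (Set.Ioo a b) :=
      hψ'an.eqOn_zero_of_preconnected_of_frequently_eq_zero isPreconnected_Ioo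
        (hKsub hz₀K) hfreq
    -- then ψ is constant on [x 0, x 1], contradiction with alternating values
    have h01 : (0 : Fin (p + 1)) < 1 := by
      rw [Fin.lt_def, Fin.val_zero, Fin.val_one', Nat.mod_eq_of_lt (by omega : 1 < p + 1)]
      norm_num
    have hx01 : x 0 < x 1 := hxmono h01
    have hsub01 : Set.Icc (x 0) (x 1) ⊆ Set.Ioo a b := by
      intro u hu
      exact ⟨lt_of_lt_of_le (hxmem 0).1 hu.1, lt_of_le_of_lt hu.2 (hxmem 1).2⟩
    have hconst := constant_of_has_deriv_right_zero
      (f := ψ) (a := x 0) (b := x 1)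
      ((hψan.continuousOn).mono hsub01)
      (fun u hu => by
        have hu' : u ∈ Set.Ioo a b := hsub01 ⟨hu.1, le_of_lt hu.2⟩
        have hd : HasDerivAt ψ (deriv ψ u) u := ((hψan u hu').differentiableAt).hasDerivAt
        rw [heq hu'] at hd
        exact hd.hasDerivWithinAt)
    have h1 := hconst (x 1) ⟨le_of_lt hx01, le_refl _⟩
    rw [hψval 1, hψval 0] at h1
    have hv1 : ((1 : Fin (p + 1)) : ℕ) = 1 := by
      rw [Fin.val_one']; exact Nat.mod_eq_of_lt (by omega)
    rw [hv1] at h1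
    norm_num at h1
  -- pick a regular value t ∈ (-1, 1)
  obtain ⟨t, htmem, htnim⟩ : ∃ t, t ∈ Set.Ioo (-1 : ℝ) 1 ∧ t ∉ ψ '' Z := by
    obtain ⟨t, ht⟩ := ((Set.Ioo_infinite (by norm_num : (-1 : ℝ) < 1)).diff
      (hZfin.image ψ)).nonempty
    exact ⟨t, ht.1, ht.2⟩
  -- IVT: find zeros of ψ - t in each interval
  have hzex : ∀ k : Fin p, ∃ zk ∈ Set.Ioo (x k.castSucc) (x k.succ), ψ zk = t := by
    intro k
    have hlt : x k.castSucc < x k.succ := hxmono (Fin.castSucc_lt_succ : k.castSucc < k.succ)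
    have hsubk : Set.Icc (x k.castSucc) (x k.succ) ⊆ Set.Ioo a b := by
      intro u hu
      exact ⟨lt_of_lt_of_le (hxmem k.castSucc).1 hu.1, lt_of_le_of_lt hu.2 (hxmem k.succ).2⟩
    have hcont : ContinuousOn ψ (Set.Icc (x k.castSucc) (x k.succ)) :=
      (hψan.continuousOn).mono hsubk
    have hsucc : ((k.succ : Fin (p + 1)) : ℕ) = (k : ℕ) + 1 := rfl
    have hcs : ((k.castSucc : Fin (p + 1)) : ℕ) = (k : ℕ) := rfl
    rcases Nat.even_or_odd (k : ℕ) with he | ho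
    · -- ψ left = 1, ψ right = -1 : decreasing
      have hL : ψ (x k.castSucc) = 1 := by rw [hψval, hcs, he.neg_one_pow]
      have hR : ψ (x k.succ) = -1 := by
        rw [hψval, hsucc, pow_succ, he.neg_one_pow]; norm_num
      have := intermediate_value_Ioo' (le_of_lt hlt) hcont
        (by rw [hL, hR]; exact htmem : t ∈ Set.Ioo (ψ (x k.succ)) (ψ (x k.castSucc)))
      obtain ⟨zk, hzk, hzkv⟩ := this
      exact ⟨zk, hzk, hzkv⟩
    · have hL : ψ (x k.castSucc) = -1 := by rw [hψval, hcs, ho.neg_one_pow]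
      have hR : ψ (x k.succ) = 1 := by
        rw [hψval, hsucc, pow_succ, ho.neg_one_pow]; norm_num
      have := intermediate_value_Ioo (le_of_lt hlt) hcont
        (by rw [hL, hR]; exact htmem : t ∈ Set.Ioo (ψ (x k.castSucc)) (ψ (x k.succ)))
      obtain ⟨zk, hzk, hzkv⟩ := this
      exact ⟨zk, hzk, hzkv⟩
  choose z hzmem hzval using hzex
  -- the final coefficients
  set C : Fin (p + 1) → ℝ := fun s => c s - if s = j then t else 0 with hC
  have hkey : ∀ u, (∑ s, C s * f s u) = g u - t * f j u := by
    intro u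
    rw [hC, hg]
    simp only [sub_mul, Finset.sum_sub_distrib, ite_mul, zero_mul]
    congr 1
    rw [Finset.sum_ite_eq' Finset.univ j (fun s => t * f s u)]
    simp
  have hzIoo : ∀ k, z k ∈ Set.Ioo a b := by
    intro k
    have h1 := (hzmem k).1
    have h2 := (hzmem k).2
    exact ⟨lt_trans (hxmem k.castSucc).1 h1, lt_trans h2 (hxmem k.succ).2⟩
  have hzK : ∀ k, z k ∈ K := by
    intro k
    refine ⟨le_of_lt (lt_of_le_of_lt (hxmono.monotone (Fin.zero_le _)) (hzmem k).1), ?_⟩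
    exact le_of_lt (lt_of_lt_of_le (hzmem k).2 (hxmono.monotone (Fin.le_last _)))
  refine ⟨C, z, ?_, ?_⟩
  · -- strict monotonicity
    intro k l hkl
    have h1 : z k < x k.succ := (hzmem k).2
    have h2 : x l.castSucc < z l := (hzmem l).1
    have h3 : (k.succ : Fin (p + 1)) ≤ l.castSucc := by
      rw [Fin.le_def]
      have : (k : ℕ) < (l : ℕ) := hkl
      simpa using this
    exact lt_of_lt_of_le h1 (le_trans (hxmono.monotone h3) (le_of_lt h2))
  · intro k
    have hzk := hzIoo k
    have hfjz : f j (z k) ≠ 0 := hfj _ hzk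
    have hgz : g (z k) = t * f j (z k) := by
      have h := hzval k
      rw [hψdef] at h
      exact (div_eq_iff hfjz).1 h
    refine ⟨hzk, ?_, ?_⟩
    · rw [hkey (z k), hgz]; ring
    · -- derivative nonzero
      have hψ'ne : deriv ψ (z k) ≠ 0 := by
        intro h0
        exact htnim ⟨z k, ⟨hzK k, h0⟩, hzval k⟩
      have hdψ : HasDerivAt ψ (deriv ψ (z k)) (z k) :=
        ((hψan _ hzk).differentiableAt).hasDerivAt
      have hdfj : HasDerivAt (f j) (deriv (f j) (z k)) (z k) :=
        ((han j _ hzk).differentiableAt).hasDerivAt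
      -- g agrees with ψ * f j near z k
      have hev : g =ᶠ[nhds (z k)] fun u => ψ u * f j u := by
        filter_upwards [isOpen_Ioo.mem_nhds hzk] with u hu
        rw [hψdef]
        simp only
        rw [div_mul_cancel₀ _ (hfj u hu)]
      have hdg : HasDerivAt g (deriv ψ (z k) * f j (z k) + ψ (z k) * deriv (f j) (z k)) (z k) :=
        (hdψ.mul hdfj).congr_of_eventuallyEq hev
      have hdh : HasDerivAt (fun u => ∑ s, C s * f s u)
          (deriv ψ (z k) * f j (z k) + ψ (z k) * deriv (f j) (z k) - t * deriv (f j) (z k))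
          (z k) := by
        have := hdg.sub (hdfj.const_mul t)
        refine this.congr_of_eventuallyEq ?_
        filter_upwards with u
        rw [hkey u]; rfl
      rw [hdh.deriv, hzval k]
      have heq2 : deriv ψ (z k) * f j (z k) + t * deriv (f j) (z k) - t * deriv (f j) (z k)
          = deriv ψ (z k) * f j (z k) := by ring
      rw [heq2]
      exact mul_ne_zero hψ'ne hfjz
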